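/- Let S be a codimension-one smooth submanifold of M and f ∈ End(M,S) tangential with f ≢ id. In an adapted chart write f^1 − z^1 = h^1 (z^1)^{ν_f+1} (h^1 uniquely determined). If (Û, ẑ) is another adapted chart with ẑ^1 = a z^1, then a^{ν_f+1} ĥ^1 = a h^1 + (∂a/∂z^p) g^p mod I_S, where f^p − z^p = g^p (z^1)^{ν_f} for p = 2,…,n. -/

import Mathlib

open Filter Topology

abbrev Esp (n : ℕ) := Fin n → ℂ

/-!
STATEMENT 10.  `S` is a smooth hypersurface, described in the chart `(U,z)` (taken to be
the identity chart of `ℂ^n`, with `S ∩ U = {z^1 = 0}`, the coordinate `z^1` being `x 0`)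
and in a second adapted chart `(Û,ẑ)` with `ẑ^1 = a·z^1` for a nonvanishing holomorphic
function `a`.  `f` fixes `S` pointwise and is tangential with order of contact `ν`, so
that `f^1 − z^1 = h^1·(z^1)^{ν+1}` (`hh`) and `f^p − z^p = g^p·(z^1)^ν` for `p ≥ 2`
(`hg`); in the hat chart `ẑ^1 ∘ f − ẑ^1 = ĥ^1·(ẑ^1)^{ν+1}` (`hhhat`).  Conclusion
(formula (4.2)): `a^{ν+1}·ĥ^1 = a·h^1 + ∑_p (∂a/∂z^p)·g^p (mod I_S)`, i.e. the two
sides agree at every point of `S ∩ U`.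
-/
theorem statement_10 {n : ℕ} [NeZero n] (hn : 2 ≤ n) (ν : ℕ) (hν : 1 ≤ ν)
    (U : Set (Esp n)) (hU : IsOpen U)
    (f : Esp n → Esp n) (hfa : AnalyticOnNhd ℂ f U) (hmaps : Set.MapsTo f U U)
    (hfix : ∀ x ∈ U, x 0 = 0 → f x = x)
    (a : Esp n → ℂ) (ha : AnalyticOnNhd ℂ a U) (hane : ∀ x ∈ U, a x ≠ 0)
    (h g : Esp n → ℂ) (gp : Fin n → Esp n → ℂ) (hhat : Esp n → ℂ)
    (hha : AnalyticOnNhd ℂ h U) (hgpa : ∀ p, AnalyticOnNhd ℂ (gp p) U)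
    (hhata : AnalyticOnNhd ℂ hhat U)
    (hh : ∀ x ∈ U, f x 0 - x 0 = h x * (x 0) ^ (ν + 1))
    (hg : ∀ p : Fin n, 1 ≤ (p : ℕ) → ∀ x ∈ U, f x p - x p = gp p x * (x 0) ^ ν)
    (hhhat : ∀ x ∈ U, a (f x) * f x 0 - a x * x 0 = hhat x * (a x * x 0) ^ (ν + 1)) :
    ∀ x ∈ U, x 0 = 0 →
      (a x) ^ (ν + 1) * hhat x =
        a x * h x +
          ∑ p ∈ Finset.univ.filter (fun p : Fin n => 1 ≤ (p : ℕ)),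
            (fderiv ℂ a x) (Pi.single p 1) * gp p x := by
  intro x hx hx0
  classical
  have hval : ∀ i : Fin n, i ≠ 0 → 1 ≤ (i : ℕ) := by
    intro i hi
    rcases Nat.eq_zero_or_pos (i : ℕ) with h0 | h0
    · exact absurd (Fin.ext (by simp [h0])) hi
    · exact h0
  -- The curve through x transverse to S
  set c : ℂ → Esp n := fun t i => if i = 0 then t else x i with hcdef
  have hc0 : c 0 = x := by
    funext i
    by_cases hi : i = 0
    · simp [hcdef, hi, hx0]
    · simp [hcdef, hi]
  have hct0 : ∀ t, c t 0 = t := by intro t; simp [hcdef]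
  have hccont : Continuous c := by
    apply continuous_pi
    intro i
    by_cases hi : i = 0
    · simpa [hcdef, hi] using continuous_id'
    · simpa [hcdef, hi] using continuous_const
  have tendsto_c : Tendsto c (𝓝 0) (𝓝 x) := by
    simpa [hc0] using hccont.tendsto 0
  set l : Filter ℂ := 𝓝[≠] (0 : ℂ) with hldef
  have hl_le : l ≤ 𝓝 0 := nhdsWithin_le_nhds
  have hevU : ∀ᶠ t in 𝓝 (0 : ℂ), c t ∈ U := tendsto_c (hU.mem_nhds hx)
  have hfx : f x = x := hfix x hx hx0
  have tendsto_fc : Tendsto (fun t => f (c t)) (𝓝 0) (𝓝 x) := by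
    have : Tendsto (fun t => f (c t)) (𝓝 0) (𝓝 (f x)) :=
      ((hfa x hx).continuousAt.tendsto).comp tendsto_c
    rwa [hfx] at this
  -- the displacement and its normalized version
  set Δ : ℂ → Esp n := fun t => f (c t) - c t with hΔdef
  set v : ℂ → Esp n := fun t i => if i = 0 then h (c t) * t else gp i (c t) with hvdef
  set w₀ : Esp n := fun i => if i = 0 then 0 else gp i x with hw₀def
  have hΔ : ∀ᶠ t in 𝓝 (0 : ℂ), Δ t = t ^ ν • v t := by
    filter_upwards [hevU] with t htU
    funext i
    by_cases hi : i = 0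
    · have h0 := hh (c t) htU
      rw [hct0] at h0
      have hv : v t i = h (c t) * t := by simp [hvdef, hi]
      have hΔi : Δ t i = h (c t) * t ^ (ν + 1) := by
        show f (c t) i - c t i = _
        rw [hi, hct0]; exact h0
      rw [Pi.smul_apply, hΔi, hv, smul_eq_mul]; ring
    · have hi1 : 1 ≤ (i : ℕ) := hval i hi
      have h0 := hg i hi1 (c t) htU
      rw [hct0] at h0
      have hv : v t i = gp i (c t) := by simp [hvdef, hi]
      have hΔi : Δ t i = gp i (c t) * t ^ ν := h0
      rw [Pi.smul_apply, hΔi, hv, smul_eq_mul]; ring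
  have tendsto_v : Tendsto v (𝓝 0) (𝓝 w₀) := by
    rw [tendsto_pi_nhds]
    intro i
    by_cases hi : i = 0
    · have h1 : Tendsto (fun t : ℂ => h (c t) * t) (𝓝 0) (𝓝 (h x * 0)) :=
        (((hha x hx).continuousAt.tendsto).comp tendsto_c).mul tendsto_id
      simp only [hvdef, hw₀def, hi, if_true, mul_zero] at h1 ⊢
      simpa using h1
    · have h1 : Tendsto (fun t : ℂ => gp i (c t)) (𝓝 0) (𝓝 (gp i x)) :=
        (((hgpa i x hx).continuousAt.tendsto).comp tendsto_c)
      simp only [hvdef, hw₀def, hi, if_false]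
      exact h1
  set D : (Esp n) →L[ℂ] ℂ := fderiv ℂ a x with hDdef
  have hs : HasStrictFDerivAt a D x := (ha x hx).hasStrictFDerivAt
  have htendpair : Tendsto (fun t => (f (c t), c t)) l (𝓝 (x, x)) :=
    ((tendsto_fc.prodMk_nhds tendsto_c).mono_left hl_le)
  have hlo : (fun t => a (f (c t)) - a (c t) - D (Δ t)) =o[l] fun t => Δ t :=
    hs.isLittleO.comp_tendsto htendpair
  -- Δ is O(t^ν)
  have hΔO : Δ =O[𝓝 (0 : ℂ)] fun t => t ^ ν := by
    have hvb : ∀ᶠ t in 𝓝 (0 : ℂ), ‖v t‖ ≤ ‖w₀‖ + 1 := by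
      have hnrm : Tendsto (fun t => ‖v t‖) (𝓝 0) (𝓝 ‖w₀‖) := tendsto_v.norm
      filter_upwards [hnrm.eventually_lt_const (lt_add_one _)] with t ht using ht.le
    apply Asymptotics.IsBigO.of_bound (‖w₀‖ + 1)
    filter_upwards [hΔ, hvb] with t ht hvt
    rw [ht, norm_smul]
    calc ‖t ^ ν‖ * ‖v t‖ ≤ ‖t ^ ν‖ * (‖w₀‖ + 1) :=
          mul_le_mul_of_nonneg_left hvt (norm_nonneg _)
      _ = (‖w₀‖ + 1) * ‖t ^ ν‖ := by ring
  have h1 : Tendsto (fun t => (a (f (c t)) - a (c t) - D (Δ t)) / t ^ ν) l (𝓝 0) :=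
    (hlo.trans_isBigO (hΔO.mono hl_le)).tendsto_div_nhds_zero
  have h2 : Tendsto (fun t => D (Δ t) / t ^ ν) l (𝓝 (D w₀)) := by
    have key : (fun t => D (Δ t) / t ^ ν) =ᶠ[l] fun t => D (v t) := by
      have hne : ∀ᶠ t in l, t ≠ 0 := eventually_mem_nhdsWithin
      filter_upwards [hΔ.filter_mono hl_le, hne] with t ht htne
      rw [ht, map_smul, smul_eq_mul, mul_div_cancel_left₀ _ (pow_ne_zero _ htne)]
    have : Tendsto (fun t => D (v t)) l (𝓝 (D w₀)) :=
      (D.continuous.tendsto w₀).comp (tendsto_v.mono_left hl_le)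
    exact Tendsto.congr' key.symm this
  have hG : Tendsto (fun t => (a (f (c t)) - a (c t)) / t ^ ν) l (𝓝 (0 + D w₀)) := by
    apply (h1.add h2).congr
    intro t
    ring
  rw [zero_add] at hG
  -- limits of the two sides of the main identity
  have hL : Tendsto (fun t => (a (f (c t)) - a (c t)) / t ^ ν + a (f (c t)) * h (c t)) l
      (𝓝 (D w₀ + a x * h x)) := by
    apply hG.add
    exact ((((ha x hx).continuousAt.tendsto).comp tendsto_fc).mul
      (((hha x hx).continuousAt.tendsto).comp tendsto_c)).mono_left hl_le
  have hR : Tendsto (fun t => hhat (c t) * a (c t) ^ (ν + 1)) l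
      (𝓝 (hhat x * a x ^ (ν + 1))) := by
    exact ((((hhata x hx).continuousAt.tendsto).comp tendsto_c).mul
      ((((ha x hx).continuousAt.tendsto).comp tendsto_c).pow (ν + 1))).mono_left hl_le
  -- the two sides are eventually equal
  have heq : (fun t => (a (f (c t)) - a (c t)) / t ^ ν + a (f (c t)) * h (c t)) =ᶠ[l]
      (fun t => hhat (c t) * a (c t) ^ (ν + 1)) := by
    have hne : ∀ᶠ t in l, t ≠ 0 := eventually_mem_nhdsWithin
    filter_upwards [hevU.filter_mono hl_le, hne] with t htU htne
    have e1 := hhhat (c t) htU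
    rw [hct0] at e1
    have e0 : f (c t) 0 = t + h (c t) * t ^ (ν + 1) := by
      have h0 := hh (c t) htU
      rw [hct0] at h0
      linear_combination h0
    rw [e0] at e1
    have htν : (t : ℂ) ^ ν ≠ 0 := pow_ne_zero _ htne
    have key : a (f (c t)) - a (c t) =
        (hhat (c t) * a (c t) ^ (ν + 1) - a (f (c t)) * h (c t)) * t ^ ν := by
      apply mul_left_cancel₀ htne
      linear_combination e1
    calc (a (f (c t)) - a (c t)) / t ^ ν + a (f (c t)) * h (c t)
        = ((hhat (c t) * a (c t) ^ (ν + 1) - a (f (c t)) * h (c t)) * t ^ ν) / t ^ ν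
            + a (f (c t)) * h (c t) := by rw [key]
      _ = hhat (c t) * a (c t) ^ (ν + 1) := by
            rw [mul_div_cancel_right₀ _ htν]; ring
  have := tendsto_nhds_unique (hL.congr' heq) hR
  -- this : D w₀ + a x * h x = hhat x * a x ^ (ν + 1)
  have hw : D w₀ = ∑ p ∈ Finset.univ.filter (fun p : Fin n => 1 ≤ (p : ℕ)),
      D (Pi.single p 1) * gp p x := by
    have hw₀ : w₀ = ∑ p ∈ Finset.univ.filter (fun p : Fin n => 1 ≤ (p : ℕ)),
        gp p x • (Pi.single p 1 : Esp n) := by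
      funext i
      rw [Finset.sum_apply]
      simp only [Pi.smul_apply, Pi.single_apply, smul_eq_mul, mul_ite, mul_one, mul_zero]
      rw [Finset.sum_ite_eq _ i (fun p => gp p x)]
      by_cases hi : i = 0
      · simp [hw₀def, hi]
      · have hi1 : 1 ≤ (i : ℕ) := hval i hi
        simp [hw₀def, hi, hi1]
    rw [hw₀, map_sum]
    apply Finset.sum_congr rfl
    intro p _
    rw [map_smul, smul_eq_mul]
    ring
    -- D (gp p x • single p 1) = gp p x * D (single p 1) = D (single p 1) * gp p x
  rw [hw] at this
  linear_combination -this
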